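/- Weak duality with approximately feasible duals for the Stochastic Configuration LP: let U and V be finite sets, with V carrying a linear order ≺, and p : U × V → [0,1]; set S(v) = {v' ∈ S : v' ≺ v}, p_{uS} = Σ_{v∈S} p_{uv}, and p̃_{uS} = 1 − ∏_{v∈S}(1 − p_{uv}). Let θ = (θ_u)_{u∈U} be independent random variables, each exponentially distributed with mean 1. Let Γ ≥ 0, and let α_u : ℝ_{≥0}^U → ℝ_{≥0} (measurable, depending only on the coordinates θ_{-u} other than u) and β_v : ℝ_{≥0}^U → ℝ_{≥0} (measurable) satisfy, for every u ∈ U, every S ⊆ V, and almost every θ_{-u}: α_u(θ_{-u}) + E_{θ_u}[ Σ_{v∈S : θ_u ≥ p_{uS(v)}} β_v(θ_u, θ_{-u}) ] ≥ Γ · p̃_{uS}. Then for every family y_{uS} : ℝ_{≥0}^U → [0,1] (measurable, with y_{uS} depending only on θ_{-u}) satisfying, for every u and almost every θ_{-u}, Σ_{S⊆V} y_{uS}(θ_{-u}) ≤ 1, and for every v ∈ V and almost every θ, Σ_{u∈U} Σ_{S⊆V : v∈S, θ_u ≥ p_{uS(v)}} y_{uS}(θ_{-u}) ≤ 1, one has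 Γ · Σ_{u∈U} Σ_{S⊆V} p̃_{uS} · E_{θ_{-u}}[y_{uS}(θ_{-u})] ≤ E_θ[ Σ_{u∈U} α_u(θ_{-u}) + Σ_{v∈V} β_v(θ) ]. -/

import Mathlib

open Finset MeasureTheory ProbabilityTheory
open scoped ENNReal

/-- Integrating out a freshly resampled coordinate of a product probability
measure leaves the lower Lebesgue integral unchanged. -/
lemma lintegral_update_pi {U : Type*} [Fintype U] [DecidableEq U]
    (μ : U → Measure ℝ) [∀ i, IsProbabilityMeasure (μ i)] (u : U)
    {g : (U → ℝ) → ℝ≥0∞} (hg : Measurable g)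
    (Θ : Measure (U → ℝ)) (hΘ : Θ = Measure.pi μ) :
    ∫⁻ θ, ∫⁻ t, g (Function.update θ u t) ∂(μ u) ∂Θ = ∫⁻ θ, g θ ∂Θ := by
  subst hΘ
  have hF : (fun θ => ∫⁻ t, g (Function.update θ u t) ∂(μ u))
      = (∫⋯∫⁻_{u}, g ∂μ) := by
    funext x; rw [lmarginal_singleton]
  rw [hF]
  apply lintegral_eq_of_lmarginal_eq {u} (hg.lmarginal μ) hg
  funext x
  rw [lmarginal_singleton, lmarginal_singleton]
  simp only []
  have : ∀ t : ℝ, ∫⁻ (s : ℝ), g (Function.update (Function.update x u t) u s) ∂μ u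
      = ∫⁻ (s : ℝ), g (Function.update x u s) ∂μ u := by
    intro t; simp_rw [Function.update_idem]
  simp_rw [this, lintegral_const, measure_univ, mul_one]

theorem stochastic_configuration_lp_weak_duality
    {U V : Type*} [Fintype U] [DecidableEq U] [Fintype V] [DecidableEq V]
    [LinearOrder V]
    (p : U → V → ℝ) (hp : ∀ u v, p u v ∈ Set.Icc (0 : ℝ) 1)
    (Γ : ℝ) (hΓ : 0 ≤ Γ)
    -- the product measure of i.i.d. exponential budgets with mean 1
    (Θ : Measure (U → ℝ)) (hΘ : Θ = Measure.pi fun _ : U => expMeasure 1)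
    (α : U → (U → ℝ) → ℝ) (β : V → (U → ℝ) → ℝ)
    (hαmeas : ∀ u, Measurable (α u)) (hβmeas : ∀ v, Measurable (β v))
    (hαnonneg : ∀ u θ, 0 ≤ α u θ) (hβnonneg : ∀ v θ, 0 ≤ β v θ)
    -- `α u` depends only on the coordinates other than `u`
    (hαindep : ∀ u (θ θ' : U → ℝ), (∀ u' ≠ u, θ u' = θ' u') → α u θ = α u θ')
    (hαint : ∀ u, Integrable (α u) Θ) (hβint : ∀ v, Integrable (β v) Θ)
    -- approximate dual feasibility, for almost every realization of budgets
    (hdual : ∀ u : U, ∀ S : Finset V, ∀ᵐ θ ∂Θ,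
      α u θ +
        ∫ t, (∑ v ∈ S.filter fun v => ∑ v' ∈ S.filter (· < v), p u v' ≤ t,
            β v (Function.update θ u t)) ∂(expMeasure 1)
        ≥ Γ * (1 - ∏ v ∈ S, (1 - p u v)))
    (y : U → Finset V → (U → ℝ) → ℝ)
    (hymeas : ∀ u S, Measurable (y u S))
    (hyrange : ∀ u S θ, y u S θ ∈ Set.Icc (0 : ℝ) 1)
    -- `y u S` depends only on the coordinates other than `u`
    (hyindep : ∀ u S (θ θ' : U → ℝ), (∀ u' ≠ u, θ u' = θ' u') →
      y u S θ = y u S θ')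
    (hoffline : ∀ u : U, ∀ᵐ θ ∂Θ, ∑ S : Finset V, y u S θ ≤ 1)
    (honline : ∀ v : V, ∀ᵐ θ ∂Θ,
      ∑ u : U, ∑ S ∈ Finset.univ.filter
          (fun S : Finset V =>
            v ∈ S ∧ ∑ v' ∈ S.filter (· < v), p u v' ≤ θ u),
        y u S θ ≤ 1) :
    Γ * ∑ u : U, ∑ S : Finset V,
        (1 - ∏ v ∈ S, (1 - p u v)) * ∫ θ, y u S θ ∂Θ
      ≤ ∫ θ, (∑ u : U, α u θ + ∑ v : V, β v θ) ∂Θ := by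
  haveI hν : IsProbabilityMeasure (expMeasure 1) :=
    isProbabilityMeasure_expMeasure one_pos
  haveI hΘP : IsProbabilityMeasure Θ := by rw [hΘ]; infer_instance
  -- abbreviations
  obtain ⟨q, hqd⟩ : ∃ q : U → Finset V → ℝ,
      ∀ u S, q u S = 1 - ∏ v ∈ S, (1 - p u v) := ⟨_, fun _ _ => rfl⟩
  obtain ⟨c, hcd⟩ : ∃ c : U → Finset V → V → ℝ,
      ∀ u S v, c u S v = ∑ v' ∈ S.filter (· < v), p u v' := ⟨_, fun _ _ _ => rfl⟩
  simp only [← hqd] at hdual ⊢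
  simp only [← hcd] at hdual honline
  have hq0 : ∀ u S, 0 ≤ q u S := by
    intro u S
    have h := Finset.prod_le_one (s := S) (f := fun v => 1 - p u v)
      (fun v _ => by linarith [(hp u v).2]) (fun v _ => by linarith [(hp u v).1])
    rw [hqd]; linarith
  obtain ⟨G, hGd⟩ : ∃ G : U → Finset V → (U → ℝ) → ℝ≥0∞,
      ∀ u S θ, G u S θ = ENNReal.ofReal (y u S θ)
        * ∑ v ∈ S, if c u S v ≤ θ u then ENNReal.ofReal (β v θ) else 0 :=
    ⟨_, fun _ _ _ => rfl⟩
  have hGm : ∀ u S, Measurable (G u S) := by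
    intro u S
    have : G u S = fun θ => ENNReal.ofReal (y u S θ)
        * ∑ v ∈ S, if c u S v ≤ θ u then ENNReal.ofReal (β v θ) else 0 :=
      funext fun θ => hGd u S θ
    rw [this]
    exact (hymeas u S).ennreal_ofReal.mul (Finset.measurable_sum _ fun v _ =>
      Measurable.ite (measurableSet_le measurable_const (measurable_pi_apply u))
        (hβmeas v).ennreal_ofReal measurable_const)
  -- integrability of y
  have hyint : ∀ u S, Integrable (y u S) Θ := fun u S =>
    (integrable_const (1 : ℝ)).mono' (hymeas u S).aestronglyMeasurable
      (ae_of_all _ fun θ => by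
        rw [Real.norm_eq_abs, abs_le]
        exact ⟨by linarith [(hyrange u S θ).1], (hyrange u S θ).2⟩)
  have hyint0 : ∀ u S, 0 ≤ ∫ θ, y u S θ ∂Θ := fun u S =>
    integral_nonneg fun θ => (hyrange u S θ).1
  have hαint0 : ∀ u, 0 ≤ ∫ θ, α u θ ∂Θ := fun u => integral_nonneg (hαnonneg u)
  have hβint0 : ∀ v, 0 ≤ ∫ θ, β v θ ∂Θ := fun v => integral_nonneg (hβnonneg v)
  -- decomposition of the right-hand side
  have hR : ∫ θ, (∑ u : U, α u θ + ∑ v : V, β v θ) ∂Θ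
      = (∑ u : U, ∫ θ, α u θ ∂Θ) + ∑ v : V, ∫ θ, β v θ ∂Θ := by
    rw [integral_add (integrable_finset_sum _ fun u _ => hαint u)
      (integrable_finset_sum _ fun v _ => hβint v),
      integral_finset_sum _ (fun u _ => hαint u),
      integral_finset_sum _ (fun v _ => hβint v)]
  have hRnn : 0 ≤ ∫ θ, (∑ u : U, α u θ + ∑ v : V, β v θ) ∂Θ := by
    rw [hR]
    exact add_nonneg (Finset.sum_nonneg fun u _ => hαint0 u)
      (Finset.sum_nonneg fun v _ => hβint0 v)
  rw [← ENNReal.ofReal_le_ofReal_iff hRnn]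
  have hLeq : ENNReal.ofReal (Γ * ∑ u : U, ∑ S : Finset V, q u S * ∫ θ, y u S θ ∂Θ)
      = ENNReal.ofReal Γ * ∑ u : U, ∑ S : Finset V,
          ENNReal.ofReal (q u S) * ∫⁻ θ, ENNReal.ofReal (y u S θ) ∂Θ := by
    rw [ENNReal.ofReal_mul hΓ,
      ENNReal.ofReal_sum_of_nonneg (fun u _ => Finset.sum_nonneg fun S _ =>
        mul_nonneg (hq0 u S) (hyint0 u S))]
    congr 1
    refine Finset.sum_congr rfl fun u _ => ?_
    rw [ENNReal.ofReal_sum_of_nonneg (fun S _ => mul_nonneg (hq0 u S) (hyint0 u S))]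
    refine Finset.sum_congr rfl fun S _ => ?_
    rw [ENNReal.ofReal_mul (hq0 u S),
      ofReal_integral_eq_lintegral_ofReal (hyint u S)
        (ae_of_all _ fun θ => (hyrange u S θ).1)]
  have hReq : ENNReal.ofReal (∫ θ, (∑ u : U, α u θ + ∑ v : V, β v θ) ∂Θ)
      = (∑ u : U, ∫⁻ θ, ENNReal.ofReal (α u θ) ∂Θ)
        + ∑ v : V, ∫⁻ θ, ENNReal.ofReal (β v θ) ∂Θ := by
    rw [hR, ENNReal.ofReal_add (Finset.sum_nonneg fun u _ => hαint0 u)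
        (Finset.sum_nonneg fun v _ => hβint0 v),
      ENNReal.ofReal_sum_of_nonneg (fun u _ => hαint0 u),
      ENNReal.ofReal_sum_of_nonneg (fun v _ => hβint0 v)]
    congr 1
    · exact Finset.sum_congr rfl fun u _ =>
        ofReal_integral_eq_lintegral_ofReal (hαint u) (ae_of_all _ (hαnonneg u))
    · exact Finset.sum_congr rfl fun v _ =>
        ofReal_integral_eq_lintegral_ofReal (hβint v) (ae_of_all _ (hβnonneg v))
  rw [hLeq, hReq]
  -- measurability of the inner integrand
  have hinnerm : ∀ (u : U) (S : Finset V) (θ : U → ℝ), Measurable (fun t : ℝ =>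
      ∑ v ∈ S.filter fun v => c u S v ≤ t, β v (Function.update θ u t)) := by
    intro u S θ
    have : (fun t : ℝ => ∑ v ∈ S.filter fun v => c u S v ≤ t,
        β v (Function.update θ u t))
        = fun t : ℝ => ∑ v ∈ S, if c u S v ≤ t
            then β v (Function.update θ u t) else 0 := by
      funext t; rw [Finset.sum_filter]
    rw [this]
    refine Finset.measurable_sum _ fun v _ => Measurable.ite ?_ ?_ measurable_const
    · exact measurableSet_le measurable_const measurable_id
    · exact (hβmeas v).comp (measurable_update θ)
  -- the key per-(u, S) inequality
  have h1 : ∀ u S,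
      ENNReal.ofReal Γ * (ENNReal.ofReal (q u S)
          * ∫⁻ θ, ENNReal.ofReal (y u S θ) ∂Θ)
        ≤ (∫⁻ θ, ENNReal.ofReal (y u S θ) * ENNReal.ofReal (α u θ) ∂Θ)
          + ∫⁻ θ, G u S θ ∂Θ := by
    intro u S
    rw [← mul_assoc, ← ENNReal.ofReal_mul hΓ,
      ← lintegral_const_mul _ (hymeas u S).ennreal_ofReal,
      ← lintegral_update_pi (fun _ : U => expMeasure 1) u (hGm u S) Θ hΘ,
      ← lintegral_add_left
        (f := fun θ => ENNReal.ofReal (y u S θ) * ENNReal.ofReal (α u θ)) ((hymeas u S).ennreal_ofReal.mul (hαmeas u).ennreal_ofReal)]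
    refine lintegral_mono_ae ?_
    filter_upwards [hdual u S] with θ hθ
    have hI0 : 0 ≤ ∫ t, (∑ v ∈ S.filter fun v => c u S v ≤ t,
        β v (Function.update θ u t)) ∂(expMeasure 1) :=
      integral_nonneg fun t => Finset.sum_nonneg fun v _ => hβnonneg v _
    have hof : ∀ t : ℝ, ENNReal.ofReal (∑ v ∈ S.filter fun v => c u S v ≤ t,
        β v (Function.update θ u t))
        = ∑ v ∈ S, if c u S v ≤ t
            then ENNReal.ofReal (β v (Function.update θ u t)) else 0 := by
      intro t
      rw [Finset.sum_filter, ENNReal.ofReal_sum_of_nonneg (fun v _ => ?_)]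
      · exact Finset.sum_congr rfl fun v _ => by split_ifs <;> simp
      · split_ifs with h
        · exact hβnonneg v _
        · exact le_refl (0 : ℝ)
    have hGpt : ∀ t : ℝ, ENNReal.ofReal (y u S θ)
        * ENNReal.ofReal (∑ v ∈ S.filter fun v => c u S v ≤ t,
            β v (Function.update θ u t))
        = G u S (Function.update θ u t) := by
      intro t
      have h1 : y u S (Function.update θ u t) = y u S θ :=
        hyindep u S _ θ (fun u' h => Function.update_of_ne h t θ)
      rw [hGd, h1, hof t]
      simp only [Function.update_self]
    have key : ENNReal.ofReal (y u S θ) * ENNReal.ofReal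
        (∫ t, (∑ v ∈ S.filter fun v => c u S v ≤ t,
          β v (Function.update θ u t)) ∂(expMeasure 1))
        ≤ ∫⁻ t, G u S (Function.update θ u t) ∂(expMeasure 1) := by
      have hle : ENNReal.ofReal (∫ t, (∑ v ∈ S.filter fun v => c u S v ≤ t,
          β v (Function.update θ u t)) ∂(expMeasure 1))
          ≤ ∫⁻ t, ENNReal.ofReal (∑ v ∈ S.filter fun v => c u S v ≤ t,
              β v (Function.update θ u t)) ∂(expMeasure 1) := by
        by_cases hint : Integrable (fun t => ∑ v ∈ S.filter fun v => c u S v ≤ t,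
            β v (Function.update θ u t)) (expMeasure 1)
        · rw [ofReal_integral_eq_lintegral_ofReal hint (ae_of_all _ fun t =>
            Finset.sum_nonneg fun v _ => hβnonneg v _)]
        · rw [integral_undef hint]; simp
      calc ENNReal.ofReal (y u S θ) * ENNReal.ofReal
            (∫ t, (∑ v ∈ S.filter fun v => c u S v ≤ t,
              β v (Function.update θ u t)) ∂(expMeasure 1))
          ≤ ENNReal.ofReal (y u S θ)
            * ∫⁻ t, ENNReal.ofReal (∑ v ∈ S.filter fun v => c u S v ≤ t,
                β v (Function.update θ u t)) ∂(expMeasure 1) :=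
            mul_le_mul_right hle _
        _ = ∫⁻ t, ENNReal.ofReal (y u S θ)
              * ENNReal.ofReal (∑ v ∈ S.filter fun v => c u S v ≤ t,
                  β v (Function.update θ u t)) ∂(expMeasure 1) :=
            (lintegral_const_mul _ (hinnerm u S θ).ennreal_ofReal).symm
        _ = ∫⁻ t, G u S (Function.update θ u t) ∂(expMeasure 1) :=
            lintegral_congr fun t => hGpt t
    calc ENNReal.ofReal (Γ * q u S) * ENNReal.ofReal (y u S θ)
        = ENNReal.ofReal (y u S θ) * ENNReal.ofReal (Γ * q u S) := mul_comm _ _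
      _ ≤ ENNReal.ofReal (y u S θ) * ENNReal.ofReal
            (α u θ + ∫ t, (∑ v ∈ S.filter fun v => c u S v ≤ t,
              β v (Function.update θ u t)) ∂(expMeasure 1)) :=
          mul_le_mul_right (ENNReal.ofReal_le_ofReal hθ) _
      _ = ENNReal.ofReal (y u S θ) * (ENNReal.ofReal (α u θ)
            + ENNReal.ofReal (∫ t, (∑ v ∈ S.filter fun v => c u S v ≤ t,
                β v (Function.update θ u t)) ∂(expMeasure 1))) := by
          rw [ENNReal.ofReal_add (hαnonneg u θ) hI0]
      _ = ENNReal.ofReal (y u S θ) * ENNReal.ofReal (α u θ)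
            + ENNReal.ofReal (y u S θ)
              * ENNReal.ofReal (∫ t, (∑ v ∈ S.filter fun v => c u S v ≤ t,
                  β v (Function.update θ u t)) ∂(expMeasure 1)) := mul_add _ _ _
      _ ≤ ENNReal.ofReal (y u S θ) * ENNReal.ofReal (α u θ)
            + ∫⁻ t, G u S (Function.update θ u t) ∂(expMeasure 1) :=
          add_le_add_right key _
  -- the offline constraint
  have h2 : ∀ u, (∑ S : Finset V,
      ∫⁻ θ, ENNReal.ofReal (y u S θ) * ENNReal.ofReal (α u θ) ∂Θ)
      ≤ ∫⁻ θ, ENNReal.ofReal (α u θ) ∂Θ := by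
    intro u
    rw [← lintegral_finset_sum _ (f := fun S θ => ENNReal.ofReal (y u S θ) * ENNReal.ofReal (α u θ)) (fun S _ =>
      (hymeas u S).ennreal_ofReal.mul (hαmeas u).ennreal_ofReal)]
    refine lintegral_mono_ae ?_
    filter_upwards [hoffline u] with θ hθ
    calc ∑ S : Finset V, ENNReal.ofReal (y u S θ) * ENNReal.ofReal (α u θ)
        = (∑ S : Finset V, ENNReal.ofReal (y u S θ)) * ENNReal.ofReal (α u θ) :=
          (Finset.sum_mul _ _ _).symm
      _ ≤ 1 * ENNReal.ofReal (α u θ) := by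
          refine mul_le_mul_left ?_ _
          rw [← ENNReal.ofReal_sum_of_nonneg (fun S _ => (hyrange u S θ).1)]
          exact le_trans (ENNReal.ofReal_le_ofReal hθ) (by simp)
      _ = _ := one_mul _
  -- the online constraint
  have h3 : (∑ u : U, ∑ S : Finset V, ∫⁻ θ, G u S θ ∂Θ)
      ≤ ∑ v : V, ∫⁻ θ, ENNReal.ofReal (β v θ) ∂Θ := by
    have hGsum : ∀ u, (∑ S : Finset V, ∫⁻ θ, G u S θ ∂Θ)
        = ∫⁻ θ, ∑ S : Finset V, G u S θ ∂Θ := fun u =>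
      (lintegral_finset_sum _ fun S _ => hGm u S).symm
    simp_rw [hGsum]
    rw [← lintegral_finset_sum _ (fun u _ =>
        Finset.measurable_sum _ fun S _ => hGm u S),
      ← lintegral_finset_sum _ (fun v _ => (hβmeas v).ennreal_ofReal)]
    refine lintegral_mono_ae ?_
    have hon : ∀ᵐ θ ∂Θ, ∀ v : V, ∑ u : U, ∑ S ∈ Finset.univ.filter
        (fun S : Finset V => v ∈ S ∧ c u S v ≤ θ u), y u S θ ≤ 1 :=
      ae_all_iff.2 honline
    filter_upwards [hon] with θ hθ
    have hrow : ∀ u S, G u S θ = ∑ v : V, if v ∈ S ∧ c u S v ≤ θ u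
        then ENNReal.ofReal (y u S θ) * ENNReal.ofReal (β v θ) else 0 := by
      intro u S
      rw [hGd]
      symm
      calc (∑ v : V, if v ∈ S ∧ c u S v ≤ θ u
            then ENNReal.ofReal (y u S θ) * ENNReal.ofReal (β v θ) else 0)
          = ∑ v : V, if v ∈ S then (if c u S v ≤ θ u
              then ENNReal.ofReal (y u S θ) * ENNReal.ofReal (β v θ) else 0)
              else 0 := by simp_rw [ite_and]
        _ = ∑ v ∈ univ ∩ S, (if c u S v ≤ θ u
              then ENNReal.ofReal (y u S θ) * ENNReal.ofReal (β v θ) else 0) :=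
            Finset.sum_ite_mem _ _ _
        _ = ∑ v ∈ S, (if c u S v ≤ θ u
              then ENNReal.ofReal (y u S θ) * ENNReal.ofReal (β v θ) else 0) := by
            rw [Finset.univ_inter]
        _ = ENNReal.ofReal (y u S θ)
              * ∑ v ∈ S, if c u S v ≤ θ u
                  then ENNReal.ofReal (β v θ) else 0 := by
            rw [Finset.mul_sum]
            exact Finset.sum_congr rfl fun v _ => by split_ifs <;> simp
    calc ∑ u : U, ∑ S : Finset V, G u S θ
        = ∑ u : U, ∑ S : Finset V, ∑ v : V, if v ∈ S ∧ c u S v ≤ θ u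
            then ENNReal.ofReal (y u S θ) * ENNReal.ofReal (β v θ) else 0 := by
          exact Finset.sum_congr rfl fun u _ =>
            Finset.sum_congr rfl fun S _ => hrow u S
      _ = ∑ u : U, ∑ v : V, ∑ S : Finset V, if v ∈ S ∧ c u S v ≤ θ u
            then ENNReal.ofReal (y u S θ) * ENNReal.ofReal (β v θ) else 0 :=
          Finset.sum_congr rfl fun u _ => Finset.sum_comm
      _ = ∑ v : V, ∑ u : U, ∑ S : Finset V, if v ∈ S ∧ c u S v ≤ θ u
            then ENNReal.ofReal (y u S θ) * ENNReal.ofReal (β v θ) else 0 :=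
          Finset.sum_comm
      _ ≤ ∑ v : V, ENNReal.ofReal (β v θ) := by
          refine Finset.sum_le_sum fun v _ => ?_
          have hfilter : ∀ u : U, (∑ S : Finset V, if v ∈ S ∧ c u S v ≤ θ u
              then ENNReal.ofReal (y u S θ) * ENNReal.ofReal (β v θ) else 0)
              = ∑ S ∈ Finset.univ.filter
                  (fun S : Finset V => v ∈ S ∧ c u S v ≤ θ u),
                  ENNReal.ofReal (y u S θ) * ENNReal.ofReal (β v θ) :=
            fun u => (Finset.sum_filter _ _).symm
          simp_rw [hfilter]
          calc (∑ u : U, ∑ S ∈ Finset.univ.filter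
                (fun S : Finset V => v ∈ S ∧ c u S v ≤ θ u),
                ENNReal.ofReal (y u S θ) * ENNReal.ofReal (β v θ))
              = (∑ u : U, ∑ S ∈ Finset.univ.filter
                  (fun S : Finset V => v ∈ S ∧ c u S v ≤ θ u),
                  ENNReal.ofReal (y u S θ)) * ENNReal.ofReal (β v θ) := by
                rw [Finset.sum_mul]
                exact Finset.sum_congr rfl fun u _ => (Finset.sum_mul _ _ _).symm
            _ ≤ 1 * ENNReal.ofReal (β v θ) := by
                refine mul_le_mul_left ?_ _
                have : (∑ u : U, ∑ S ∈ Finset.univ.filter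
                    (fun S : Finset V => v ∈ S ∧ c u S v ≤ θ u),
                    ENNReal.ofReal (y u S θ))
                    = ENNReal.ofReal (∑ u : U, ∑ S ∈ Finset.univ.filter
                      (fun S : Finset V => v ∈ S ∧ c u S v ≤ θ u), y u S θ) := by
                  rw [ENNReal.ofReal_sum_of_nonneg (fun u _ =>
                    Finset.sum_nonneg fun S _ => (hyrange u S θ).1)]
                  exact Finset.sum_congr rfl fun u _ =>
                    (ENNReal.ofReal_sum_of_nonneg
                      (fun S _ => (hyrange u S θ).1)).symm
                rw [this]
                exact le_trans (ENNReal.ofReal_le_ofReal (hθ v)) (by simp)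
            _ = ENNReal.ofReal (β v θ) := one_mul _
  -- assembling everything
  calc ENNReal.ofReal Γ * ∑ u : U, ∑ S : Finset V,
        ENNReal.ofReal (q u S) * ∫⁻ θ, ENNReal.ofReal (y u S θ) ∂Θ
      = ∑ u : U, ∑ S : Finset V, ENNReal.ofReal Γ * (ENNReal.ofReal (q u S)
          * ∫⁻ θ, ENNReal.ofReal (y u S θ) ∂Θ) := by
        rw [Finset.mul_sum]
        exact Finset.sum_congr rfl fun u _ => Finset.mul_sum _ _ _
    _ ≤ ∑ u : U, ∑ S : Finset V,
          ((∫⁻ θ, ENNReal.ofReal (y u S θ) * ENNReal.ofReal (α u θ) ∂Θ)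
            + ∫⁻ θ, G u S θ ∂Θ) :=
        Finset.sum_le_sum fun u _ => Finset.sum_le_sum fun S _ => h1 u S
    _ = (∑ u : U, ∑ S : Finset V,
          ∫⁻ θ, ENNReal.ofReal (y u S θ) * ENNReal.ofReal (α u θ) ∂Θ)
          + ∑ u : U, ∑ S : Finset V, ∫⁻ θ, G u S θ ∂Θ := by
        rw [← Finset.sum_add_distrib]
        exact Finset.sum_congr rfl fun u _ => Finset.sum_add_distrib
    _ ≤ (∑ u : U, ∫⁻ θ, ENNReal.ofReal (α u θ) ∂Θ)
          + ∑ v : V, ∫⁻ θ, ENNReal.ofReal (β v θ) ∂Θ :=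
        add_le_add (Finset.sum_le_sum fun u _ => h2 u) h3
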